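/- Assume the null independence-across-studies condition (with arbitrary dependence among p-values within each study), null p-values stochastically at least uniform, and stable selection rules S₁, S₂. Let 𝒮_i = S_i(P_i), S_i = |𝒮_i|, α₂ = α−α₁, and write H(k) = Σ_{l=1}^{k} 1/l. Define R = max{r ∈ ℕ : #{j ∈ 𝒮₁∩𝒮₂ : P_{1j} ≤ rα₁/(S₂·H(S₂)) and P_{2j} ≤ rα₂/(S₁·H(S₁))} = r} and reject ℛ = {j ∈ 𝒮₁∩𝒮₂ : P_{1j} ≤ Rα₁/(S₂·H(S₂)) and P_{2j} ≤ Rα₂/(S₁·H(S₁))}. Then the FDR for replicability analysis satisfies E[|ℛ ∩ {j : (H_{1j},H_{2j}) ≠ (1,1)}| / max(|ℛ|,1)] ≤ α. (Theorem 2, item 2: the harmonic-sum-corrected procedure is valid under arbitrary within-study dependence.) -/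

import Mathlib

open MeasureTheory ProbabilityTheory

/-- A selection rule is stable if, for any selected feature, changing its p-value so
that the feature is still selected, while all other p-values are held fixed, does not
change the set of selected features. -/
def StableSelection {m : ℕ} (S : (Fin m → ℝ) → Finset (Fin m)) : Prop :=
  ∀ p p' : Fin m → ℝ, ∀ j, j ∈ S p → j ∈ S p' → (∀ k, k ≠ j → p' k = p k) → S p' = S p

/-- The partial harmonic sum `H(k) = Σ_{l=1}^k 1/l`. -/
noncomputable def harmonic' (k : ℕ) : ℝ := ∑ l ∈ Finset.Icc 1 k, (1 : ℝ) / l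

/-- The step-up count `R` of the two-study FDR-replicability procedure on the selected
set `sel`, with per-unit thresholds `a1, a2`:  the largest `r` such that exactly `r`
features `j ∈ sel` satisfy `q1 j ≤ r·a1` and `q2 j ≤ r·a2`. -/
noncomputable def stepUpCount {m : ℕ} (sel : Set (Fin m)) (q1 q2 : Fin m → ℝ)
    (a1 a2 : ℝ) : ℕ :=
  sSup {r : ℕ | Nat.card {j : Fin m // j ∈ sel ∧ q1 j ≤ r * a1 ∧ q2 j ≤ r * a2} = r}

/-- The rejection region of the step-up procedure. -/
noncomputable def stepUpReject {m : ℕ} (sel : Set (Fin m)) (q1 q2 : Fin m → ℝ)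
    (a1 a2 : ℝ) : Set (Fin m) :=
  {j | j ∈ sel ∧ q1 j ≤ (stepUpCount sel q1 q2 a1 a2) * a1
      ∧ q2 j ≤ (stepUpCount sel q1 q2 a1 a2) * a2}

/-- The false discovery proportion for replicability analysis of a rejection set. -/
noncomputable def fdpRepl {m : ℕ} (H1 H2 : Fin m → Bool) (Rset : Set (Fin m)) : ℝ :=
  (Nat.card {j : Fin m // j ∈ Rset ∧ (H1 j = false ∨ H2 j = false)} : ℝ) /
    max (Nat.card {j : Fin m // j ∈ Rset} : ℝ) 1

namespace FDRAux
open scoped Classical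

/-! ### Arithmetic helpers -/

noncomputable def d (s r : ℕ) : ℝ := if r = s then 1/s else 1/r - 1/(r+1)

lemma d_nonneg (s : ℕ) {r : ℕ} (hr : 1 ≤ r) : 0 ≤ d s r := by
  unfold d
  split
  · positivity
  · have h1 : (0:ℝ) < r := by exact_mod_cast hr
    have : (1:ℝ)/(r+1) ≤ 1/r := by
      apply one_div_le_one_div_of_le h1; linarith
    linarith

lemma tele (R s : ℕ) (h : R ≤ s) :
    ∑ r ∈ Finset.Ico R s, ((1:ℝ)/r - 1/(r+1)) = 1/R - 1/s := by
  induction s with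
  | zero => interval_cases R; simp
  | succ n ih =>
    rcases Nat.lt_or_ge R (n+1) with h' | h'
    · have hRn : R ≤ n := Nat.lt_succ_iff.mp h'
      rw [Finset.sum_Ico_succ_top hRn, ih hRn]
      push_cast; ring
    · have : R = n + 1 := le_antisymm h h'
      subst this; simp

lemma sum_d (R s : ℕ) (hR : 1 ≤ R) (h : R ≤ s) :
    ∑ r ∈ Finset.Icc R s, d s r = 1/R := by
  have hIcc : Finset.Icc R s = insert s (Finset.Ico R s) := by
    rw [Finset.Ico_insert_right h]
  rw [hIcc, Finset.sum_insert (by simp)]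
  have : ∑ r ∈ Finset.Ico R s, d s r = ∑ r ∈ Finset.Ico R s, ((1:ℝ)/r - 1/(r+1)) := by
    apply Finset.sum_congr rfl
    intro r hr
    have : r ≠ s := by simp at hr; omega
    simp [d, this]
  rw [this, tele R s h]
  simp [d]

lemma harm_succ (s : ℕ) : harmonic' (s+1) = harmonic' s + 1/(s+1) := by
  unfold harmonic'
  rw [show Finset.Icc 1 (s+1) = insert (s+1) (Finset.Icc 1 s) by
    rw [Finset.insert_Icc_right_eq_Icc_add_one (by omega)]]
  rw [Finset.sum_insert (by simp)]
  push_cast; ring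

lemma harm_one_le {s : ℕ} (hs : 1 ≤ s) : 1 ≤ harmonic' s := by
  induction s with
  | zero => omega
  | succ n ih =>
    rcases Nat.eq_zero_or_pos n with h | h
    · subst h; simp [harmonic']
    · rw [harm_succ]
      have : (0:ℝ) ≤ 1/(n+1) := by positivity
      linarith [ih h]

lemma harm_nonneg (k : ℕ) : 0 ≤ harmonic' k := by
  unfold harmonic'
  apply Finset.sum_nonneg
  intro l _
  positivity

lemma aux_sum (s : ℕ) (hs : 1 ≤ s) :
    1 + ∑ r ∈ Finset.Ico 1 s, (1:ℝ)/(r+1) = harmonic' s := by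
  induction s with
  | zero => omega
  | succ n ih =>
    rcases Nat.eq_zero_or_pos n with h | h
    · subst h; simp [harmonic']
    · rw [Finset.sum_Ico_succ_top h, harm_succ, ← ih h]
      push_cast; ring

lemma sum_rd (s : ℕ) (hs : 1 ≤ s) :
    ∑ r ∈ Finset.Icc 1 s, (r : ℝ) * d s r = harmonic' s := by
  have hIcc : Finset.Icc 1 s = insert s (Finset.Ico 1 s) := by
    rw [Finset.Ico_insert_right hs]
  rw [hIcc, Finset.sum_insert (by simp)]
  have h2 : ∑ r ∈ Finset.Ico 1 s, (r:ℝ) * d s r = ∑ r ∈ Finset.Ico 1 s, (1:ℝ)/(r+1) := by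
    apply Finset.sum_congr rfl
    intro r hr
    simp only [Finset.mem_Ico] at hr
    have hne : r ≠ s := by omega
    have hr1 : (1:ℕ) ≤ r := hr.1
    have hrpos : (0:ℝ) < r := by exact_mod_cast hr1
    simp only [d, if_neg hne]
    field_simp
    ring
  rw [h2]
  have hd : d s s = 1/s := by simp [d]
  rw [hd]
  have hspos : (0:ℝ) < s := by exact_mod_cast hs
  have : (s:ℝ) * (1/s) = 1 := by field_simp
  rw [this, aux_sum s hs]

/-! ### Combinatorial step-up facts -/

lemma card_le {m : ℕ} (P : Fin m → Prop) (T : Finset (Fin m)) (h : ∀ j, P j → j ∈ T) :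
    Nat.card {j : Fin m // P j} ≤ T.card := by
  classical
  rw [Nat.card_eq_fintype_card, Fintype.card_subtype]
  exact Finset.card_le_card (fun j hj => h j (by simpa using hj))

lemma count_swap {m : ℕ} (sel : Set (Fin m)) (q1 q2 : Fin m → ℝ) (a1 a2 : ℝ) :
    stepUpCount sel q1 q2 a1 a2 = stepUpCount sel q2 q1 a2 a1 := by
  unfold stepUpCount
  congr 1
  ext r
  have : Nat.card {j : Fin m // j ∈ sel ∧ q1 j ≤ r * a1 ∧ q2 j ≤ r * a2}
      = Nat.card {j : Fin m // j ∈ sel ∧ q2 j ≤ r * a2 ∧ q1 j ≤ r * a1} :=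
    Nat.card_congr (Equiv.subtypeEquivRight (fun j => by tauto))
  simp only [Set.mem_setOf_eq, this]

lemma reject_swap {m : ℕ} (sel : Set (Fin m)) (q1 q2 : Fin m → ℝ) (a1 a2 : ℝ) :
    stepUpReject sel q1 q2 a1 a2 = stepUpReject sel q2 q1 a2 a1 := by
  unfold stepUpReject
  rw [count_swap]
  ext j
  simp only [Set.mem_setOf_eq]
  tauto

lemma pointwise {m : ℕ} (sel : Set (Fin m)) (q1 q2 : Fin m → ℝ) (a1 a2 : ℝ)
    (ha1 : 0 ≤ a1) (T : Finset (Fin m)) (hsub : ∀ k ∈ sel, k ∈ T) (j : Fin m) :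
    (if j ∈ stepUpReject sel q1 q2 a1 a2 then (1:ℝ) else 0) /
      max (Nat.card {k : Fin m // k ∈ stepUpReject sel q1 q2 a1 a2} : ℝ) 1
      ≤ ∑ r ∈ Finset.Icc 1 T.card, (if q1 j ≤ r * a1 then d T.card r else 0) := by
  classical
  have hRHSnn : ∀ r ∈ Finset.Icc 1 T.card, (0:ℝ) ≤ (if q1 j ≤ r * a1 then d T.card r else 0) := by
    intro r hr
    simp only [Finset.mem_Icc] at hr
    split
    · exact d_nonneg _ hr.1
    · exact le_rfl
  by_cases hjR : j ∈ stepUpReject sel q1 q2 a1 a2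
  · set s := T.card with hs
    set R := stepUpCount sel q1 q2 a1 a2 with hRdef
    obtain ⟨hjsel, hjq1, hjq2⟩ := hjR
    have hjT : j ∈ T := hsub j hjsel
    have hs1 : 1 ≤ s := Finset.card_pos.mpr ⟨j, hjT⟩
    have hCle : ∀ r : ℕ,
        Nat.card {k : Fin m // k ∈ sel ∧ q1 k ≤ r * a1 ∧ q2 k ≤ r * a2} ≤ s :=
      fun r => card_le _ T (fun k hk => hsub k hk.1)
    set F := {r : ℕ | Nat.card {k : Fin m // k ∈ sel ∧ q1 k ≤ r * a1 ∧ q2 k ≤ r * a2} = r}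
      with hFdef
    have hbdd : BddAbove F := ⟨s, fun r hr => by
      simp only [hFdef, Set.mem_setOf_eq] at hr
      exact hr ▸ hCle r⟩
    have hNR : Nat.card {k : Fin m // k ∈ stepUpReject sel q1 q2 a1 a2}
        = Nat.card {k : Fin m // k ∈ sel ∧ q1 k ≤ R * a1 ∧ q2 k ≤ R * a2} := rfl
    by_cases hF : F.Nonempty
    · have hRF : R ∈ F := Nat.sSup_mem hF hbdd
      have hCR : Nat.card {k : Fin m // k ∈ sel ∧ q1 k ≤ R * a1 ∧ q2 k ≤ R * a2} = R := hRF
      have hRs : R ≤ s := hCR ▸ hCle R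
      have hR1 : 1 ≤ R := by
        rw [← hCR]
        have : Nonempty {k : Fin m // k ∈ sel ∧ q1 k ≤ R * a1 ∧ q2 k ≤ R * a2} :=
          ⟨⟨j, hjsel, hjq1, hjq2⟩⟩
        exact Nat.card_pos
      have hLHS : (if j ∈ stepUpReject sel q1 q2 a1 a2 then (1:ℝ) else 0) /
          max (Nat.card {k : Fin m // k ∈ stepUpReject sel q1 q2 a1 a2} : ℝ) 1 = 1 / R := by
        rw [if_pos ⟨hjsel, hjq1, hjq2⟩, hNR, hCR]
        congr 1
        exact max_eq_left (by exact_mod_cast hR1)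
      rw [hLHS]
      calc (1:ℝ)/R = ∑ r ∈ Finset.Icc R s, d s r := (sum_d R s hR1 hRs).symm
        _ = ∑ r ∈ Finset.Icc R s, (if q1 j ≤ r * a1 then d s r else 0) := by
            apply Finset.sum_congr rfl
            intro r hr
            simp only [Finset.mem_Icc] at hr
            have : q1 j ≤ r * a1 := le_trans hjq1
              (mul_le_mul_of_nonneg_right (by exact_mod_cast hr.1) ha1)
            rw [if_pos this]
        _ ≤ ∑ r ∈ Finset.Icc 1 s, (if q1 j ≤ r * a1 then d s r else 0) := by
            apply Finset.sum_le_sum_of_subset_of_nonneg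
            · apply Finset.Icc_subset_Icc_left hR1
            · intro r hr _
              exact hRHSnn r hr
    · have hR0 : R = 0 := by
        have he : F = ∅ := Set.not_nonempty_iff_eq_empty.mp hF
        show sSup F = 0
        rw [he]
        exact csSup_empty
      have hq10 : q1 j ≤ 0 := by
        have h' := hjq1
        rw [← hRdef, hR0] at h'
        simpa using h'
      have hall : ∀ r : ℕ, q1 j ≤ r * a1 :=
        fun r => le_trans hq10 (by positivity)
      have hRHS : ∑ r ∈ Finset.Icc 1 s, (if q1 j ≤ r * a1 then d s r else 0)
          = ∑ r ∈ Finset.Icc 1 s, d s r := by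
        apply Finset.sum_congr rfl
        intro r hr
        rw [if_pos (hall r)]
      rw [hRHS, sum_d 1 s le_rfl hs1]
      rw [if_pos ⟨hjsel, hjq1, hjq2⟩]
      have h1 : (1:ℝ) ≤ max (Nat.card {k : Fin m // k ∈ stepUpReject sel q1 q2 a1 a2} : ℝ) 1 :=
        le_max_right _ _
      rw [div_le_div_iff₀ (by linarith) (by norm_num)]
      simpa using h1
  · rw [if_neg hjR]
    rw [zero_div]
    exact Finset.sum_nonneg hRHSnn

/-! ### The bounding function -/

noncomputable def gterm {m : ℕ} (α' : ℝ) (T Tω : Finset (Fin m)) (pj : ℝ) : ℝ :=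
  ∑ r ∈ Finset.Icc 1 T.card,
    if Tω = T ∧ pj ≤ r * (α' / (T.card * harmonic' T.card)) then d T.card r else 0

lemma gterm_nonneg {m : ℕ} (α' : ℝ) (T Tω : Finset (Fin m)) (pj : ℝ) :
    0 ≤ gterm α' T Tω pj := by
  apply Finset.sum_nonneg
  intro r hr
  simp only [Finset.mem_Icc] at hr
  split
  · exact d_nonneg _ hr.1
  · exact le_rfl

noncomputable def gsum {m : ℕ} (α' : ℝ) (Tω : Finset (Fin m)) (j : Fin m) (pj : ℝ) : ℝ :=
  ∑ T : Finset (Fin m), (if j ∈ T then gterm α' T Tω pj else 0)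

lemma gsum_nonneg {m : ℕ} (α' : ℝ) (Tω : Finset (Fin m)) (j : Fin m) (pj : ℝ) :
    0 ≤ gsum α' Tω j pj := by
  apply Finset.sum_nonneg
  intro T _
  split
  · exact gterm_nonneg _ _ _ _
  · exact le_rfl

lemma sum_gterm {m : ℕ} (α' : ℝ) (Tω : Finset (Fin m)) (pj : ℝ) (j : Fin m) (hj : j ∈ Tω) :
    (∑ r ∈ Finset.Icc 1 Tω.card,
        if pj ≤ r * (α' / (Tω.card * harmonic' Tω.card)) then d Tω.card r else 0)
      ≤ gsum α' Tω j pj := by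
  have h1 := Finset.single_le_sum
    (f := fun T : Finset (Fin m) => if j ∈ T then gterm α' T Tω pj else 0)
    (fun T _ => by
      split
      · exact gterm_nonneg α' T Tω pj
      · exact le_rfl)
    (Finset.mem_univ Tω)
  refine le_trans (le_of_eq ?_) h1
  show _ = if j ∈ Tω then gterm α' Tω Tω pj else 0
  rw [if_pos hj]
  unfold gterm
  apply Finset.sum_congr rfl
  intro r _
  by_cases h : pj ≤ r * (α' / (Tω.card * harmonic' Tω.card))
  · rw [if_pos h, if_pos ⟨rfl, h⟩]
  · rw [if_neg h, if_neg (fun hc => h hc.2)]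

lemma perj1 {m : ℕ} (sel : Set (Fin m)) (q1 q2 : Fin m → ℝ) (a2 : ℝ) (Tω : Finset (Fin m))
    (hsub : ∀ k ∈ sel, k ∈ Tω) (α' : ℝ) (hα' : 0 ≤ α') (j : Fin m) :
    (if j ∈ stepUpReject sel q1 q2 (α' / (Tω.card * harmonic' Tω.card)) a2 then (1:ℝ) else 0) /
      max (Nat.card {k : Fin m //
        k ∈ stepUpReject sel q1 q2 (α' / (Tω.card * harmonic' Tω.card)) a2} : ℝ) 1
      ≤ gsum α' Tω j (q1 j) := by
  have ha1 : 0 ≤ α' / (Tω.card * harmonic' Tω.card) :=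
    div_nonneg hα' (mul_nonneg (Nat.cast_nonneg _) (harm_nonneg _))
  by_cases hjT : j ∈ Tω
  · exact le_trans (pointwise sel q1 q2 _ a2 ha1 Tω hsub j) (sum_gterm α' Tω (q1 j) j hjT)
  · have hnot : j ∉ stepUpReject sel q1 q2 (α' / (Tω.card * harmonic' Tω.card)) a2 :=
      fun hmem => hjT (hsub j hmem.1)
    rw [if_neg hnot, zero_div]
    exact gsum_nonneg _ _ _ _

/-! ### FDP decomposition -/

lemma fdp_expand {m : ℕ} (H1 H2 : Fin m → Bool) (Rset : Set (Fin m)) :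
    fdpRepl H1 H2 Rset = ∑ j : Fin m,
      (if j ∈ Rset ∧ (H1 j = false ∨ H2 j = false) then (1:ℝ) else 0) /
        max (Nat.card {k : Fin m // k ∈ Rset} : ℝ) 1 := by
  unfold fdpRepl
  rw [← Finset.sum_div]
  congr 1
  rw [Nat.card_eq_fintype_card, Fintype.card_subtype, Finset.card_filter, Nat.cast_sum]
  apply Finset.sum_congr rfl
  intro j _
  split <;> simp

lemma fdp_nonneg {m : ℕ} (H1 H2 : Fin m → Bool) (Rset : Set (Fin m)) :
    0 ≤ fdpRepl H1 H2 Rset := by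
  unfold fdpRepl
  apply div_nonneg (Nat.cast_nonneg _)
  exact le_trans zero_le_one (le_max_right _ _)

/-! ### Measure-theoretic lemmas -/

lemma measurable_eq_finset {m : ℕ} (S : (Fin m → ℝ) → Finset (Fin m))
    (hS : ∀ j, MeasurableSet {p : Fin m → ℝ | j ∈ S p}) (T : Finset (Fin m)) :
    MeasurableSet {p : Fin m → ℝ | S p = T} := by
  have h1 : {p : Fin m → ℝ | S p = T} = ⋂ j : Fin m, {p | (j ∈ S p ↔ j ∈ T)} := by
    ext p
    simp [Finset.ext_iff]
  rw [h1]
  apply MeasurableSet.iInter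
  intro j
  by_cases hj : j ∈ T
  · simpa [hj] using hS j
  · have := (hS j).compl
    rw [Set.compl_setOf] at this
    simpa [hj] using this

lemma integrable_gterm {Ω : Type*} [MeasurableSpace Ω] (μ : Measure Ω) [IsProbabilityMeasure μ]
    {m : ℕ} (X : Ω → ℝ) (hX : Measurable X) (Y : Ω → Fin m → ℝ) (hY : Measurable Y)
    (S : (Fin m → ℝ) → Finset (Fin m)) (hS : ∀ j, MeasurableSet {p : Fin m → ℝ | j ∈ S p})
    (α' : ℝ) (T : Finset (Fin m)) :
    Integrable (fun ω => gterm α' T (S (Y ω)) (X ω)) μ := by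
  have hfun : (fun ω => gterm α' T (S (Y ω)) (X ω)) = fun ω =>
      ∑ r ∈ Finset.Icc 1 T.card,
        ((Y ⁻¹' {p | S p = T}) ∩ X ⁻¹' Set.Iic ((r : ℝ) * (α' / (T.card * harmonic' T.card)))).indicator
          (fun _ => d T.card r) ω := by
    funext ω
    unfold gterm
    apply Finset.sum_congr rfl
    intro r _
    rw [Set.indicator_apply]
    by_cases h : S (Y ω) = T ∧ X ω ≤ (r : ℝ) * (α' / (T.card * harmonic' T.card))
    · rw [if_pos h, if_pos]
      exact ⟨h.1, h.2⟩
    · rw [if_neg h, if_neg]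
      intro hmem
      exact h ⟨hmem.1, hmem.2⟩
  rw [hfun]
  apply integrable_finset_sum
  intro r _
  exact (integrable_const _).indicator
    ((hY (measurable_eq_finset S hS T)).inter (hX measurableSet_Iic))

lemma integral_gterm_le {Ω : Type*} [MeasurableSpace Ω] (μ : Measure Ω) [IsProbabilityMeasure μ]
    {m : ℕ} (X : Ω → ℝ) (hX : Measurable X) (Y : Ω → Fin m → ℝ) (hY : Measurable Y)
    (S : (Fin m → ℝ) → Finset (Fin m)) (hS : ∀ j, MeasurableSet {p : Fin m → ℝ | j ∈ S p})
    (α' : ℝ) (hα'0 : 0 ≤ α') (hα'1 : α' ≤ 1)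
    (hunif : ∀ x ∈ Set.Icc (0:ℝ) 1, μ {ω | X ω ≤ x} ≤ ENNReal.ofReal x)
    (hind : IndepFun X Y μ) (T : Finset (Fin m)) :
    ∫ ω, gterm α' T (S (Y ω)) (X ω) ∂μ
      ≤ (μ (Y ⁻¹' {p | S p = T})).toReal * (α' / T.card) := by
  rcases Nat.eq_zero_or_pos T.card with hs0 | hs1
  · have : ∀ ω, gterm α' T (S (Y ω)) (X ω) = 0 := by
      intro ω; unfold gterm; rw [hs0]; simp
    simp only [this, integral_zero, hs0]
    simp
  set s := T.card with hsdef
  set H := harmonic' s with hH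
  have hH1 : 1 ≤ H := harm_one_le hs1
  have hHpos : 0 < H := lt_of_lt_of_le one_pos hH1
  have hspos : (0:ℝ) < s := by exact_mod_cast hs1
  set aT := α' / (s * H) with haT
  have haTnn : 0 ≤ aT := div_nonneg hα'0 (mul_nonneg (le_of_lt hspos) (le_of_lt hHpos))
  set c := (μ (Y ⁻¹' {p | S p = T})).toReal with hc
  have hcnn : 0 ≤ c := ENNReal.toReal_nonneg
  have hB : MeasurableSet {p : Fin m → ℝ | S p = T} := measurable_eq_finset S hS T
  have key : ∀ r ∈ Finset.Icc 1 s,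
      ∫ ω, (if S (Y ω) = T ∧ X ω ≤ (r:ℝ) * aT then d s r else 0) ∂μ
        ≤ d s r * ((r:ℝ) * aT) * c := by
    intro r hr
    simp only [Finset.mem_Icc] at hr
    set x := (r:ℝ) * aT with hx
    have hxnn : 0 ≤ x := mul_nonneg (Nat.cast_nonneg r) haTnn
    have hx1 : x ≤ 1 := by
      have hrs : (r:ℝ) ≤ s := by exact_mod_cast hr.2
      have : x ≤ (s:ℝ) * aT := mul_le_mul_of_nonneg_right hrs haTnn
      have h2 : (s:ℝ) * aT = α' / H := by
        rw [haT]; field_simp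
      have h3 : α' / H ≤ α' := by
        rw [div_le_iff₀ hHpos]
        nlinarith
      linarith
    have hEeq : (fun ω => if S (Y ω) = T ∧ X ω ≤ x then d s r else 0)
        = (X ⁻¹' Set.Iic x ∩ Y ⁻¹' {p | S p = T}).indicator (fun _ => d s r) := by
      funext ω
      rw [Set.indicator_apply]
      by_cases h : S (Y ω) = T ∧ X ω ≤ x
      · rw [if_pos h, if_pos ⟨h.2, h.1⟩]
      · rw [if_neg h, if_neg (fun hmem => h ⟨hmem.2, hmem.1⟩)]
    rw [hEeq, integral_indicator_const _ ((hX measurableSet_Iic).inter (hY hB))]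
    have hmeq : μ (X ⁻¹' Set.Iic x ∩ Y ⁻¹' {p | S p = T})
        = μ (X ⁻¹' Set.Iic x) * μ (Y ⁻¹' {p | S p = T}) :=
      hind.measure_inter_preimage_eq_mul _ _ measurableSet_Iic hB
    have hXx : μ (X ⁻¹' Set.Iic x) ≤ ENNReal.ofReal x := by
      have : X ⁻¹' Set.Iic x = {ω | X ω ≤ x} := rfl
      rw [this]
      exact hunif x ⟨hxnn, hx1⟩
    have hle : μ (X ⁻¹' Set.Iic x ∩ Y ⁻¹' {p | S p = T})
        ≤ ENNReal.ofReal x * μ (Y ⁻¹' {p | S p = T}) := by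
      rw [hmeq]
      exact mul_le_mul_left hXx _
    have htoReal : (μ (X ⁻¹' Set.Iic x ∩ Y ⁻¹' {p | S p = T})).toReal ≤ x * c := by
      have h1 : (ENNReal.ofReal x * μ (Y ⁻¹' {p | S p = T})).toReal = x * c := by
        rw [ENNReal.toReal_mul, ENNReal.toReal_ofReal hxnn]
      rw [← h1]
      exact ENNReal.toReal_mono
        (ENNReal.mul_ne_top ENNReal.ofReal_ne_top (measure_ne_top μ _)) hle
    have hd : 0 ≤ d s r := d_nonneg _ hr.1
    calc (μ (X ⁻¹' Set.Iic x ∩ Y ⁻¹' {p | S p = T})).toReal • d s r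
        = (μ (X ⁻¹' Set.Iic x ∩ Y ⁻¹' {p | S p = T})).toReal * d s r := by rw [smul_eq_mul]
      _ ≤ (x * c) * d s r := mul_le_mul_of_nonneg_right htoReal hd
      _ = d s r * x * c := by ring
  have hint : ∀ r ∈ Finset.Icc 1 s, Integrable
      (fun ω => if S (Y ω) = T ∧ X ω ≤ (r:ℝ) * aT then d s r else 0) μ := by
    intro r _
    have hEeq : (fun ω => if S (Y ω) = T ∧ X ω ≤ (r:ℝ) * aT then d s r else 0)
        = (X ⁻¹' Set.Iic ((r:ℝ)*aT) ∩ Y ⁻¹' {p | S p = T}).indicator (fun _ => d s r) := by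
      funext ω
      rw [Set.indicator_apply]
      by_cases h : S (Y ω) = T ∧ X ω ≤ (r:ℝ) * aT
      · rw [if_pos h, if_pos ⟨h.2, h.1⟩]
      · rw [if_neg h, if_neg (fun hmem => h ⟨hmem.2, hmem.1⟩)]
    rw [hEeq]
    exact (integrable_const _).indicator ((hX measurableSet_Iic).inter (hY hB))
  have hgeq : ∀ ω, gterm α' T (S (Y ω)) (X ω)
      = ∑ r ∈ Finset.Icc 1 s, (if S (Y ω) = T ∧ X ω ≤ (r:ℝ) * aT then d s r else 0) := by
    intro ω; rfl
  calc ∫ ω, gterm α' T (S (Y ω)) (X ω) ∂μ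
      = ∫ ω, ∑ r ∈ Finset.Icc 1 s, (if S (Y ω) = T ∧ X ω ≤ (r:ℝ) * aT then d s r else 0) ∂μ := by
        simp only [hgeq]
    _ = ∑ r ∈ Finset.Icc 1 s, ∫ ω, (if S (Y ω) = T ∧ X ω ≤ (r:ℝ) * aT then d s r else 0) ∂μ :=
        integral_finset_sum _ hint
    _ ≤ ∑ r ∈ Finset.Icc 1 s, d s r * ((r:ℝ) * aT) * c := Finset.sum_le_sum key
    _ = (∑ r ∈ Finset.Icc 1 s, (r:ℝ) * d s r) * aT * c := by
        rw [Finset.sum_mul, Finset.sum_mul]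
        apply Finset.sum_congr rfl
        intro r _
        ring
    _ = H * aT * c := by rw [sum_rd s hs1]
    _ = c * (α' / s) := by
        rw [haT]
        field_simp

lemma sum_c_le_one {Ω : Type*} [MeasurableSpace Ω] (μ : Measure Ω) [IsProbabilityMeasure μ]
    {m : ℕ} (Y : Ω → Fin m → ℝ) (hY : Measurable Y)
    (S : (Fin m → ℝ) → Finset (Fin m)) (hS : ∀ T : Finset (Fin m),
      MeasurableSet {p : Fin m → ℝ | S p = T}) :
    ∑ T : Finset (Fin m), (μ (Y ⁻¹' {p | S p = T})).toReal ≤ 1 := by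
  have hdisj : Set.PairwiseDisjoint (↑(Finset.univ : Finset (Finset (Fin m))))
      (fun T => Y ⁻¹' {p : Fin m → ℝ | S p = T}) := by
    intro T _ T' _ hne
    rw [Function.onFun, Set.disjoint_left]
    rintro ω h1 h2
    exact hne (h1.symm.trans h2)
  calc ∑ T : Finset (Fin m), (μ (Y ⁻¹' {p | S p = T})).toReal
      = (∑ T : Finset (Fin m), μ (Y ⁻¹' {p | S p = T})).toReal :=
        (ENNReal.toReal_sum (fun T _ => measure_ne_top μ _)).symm
    _ = (μ (⋃ T ∈ (Finset.univ : Finset (Finset (Fin m))), Y ⁻¹' {p | S p = T})).toReal := by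
        rw [measure_biUnion_finset hdisj (fun T _ => hY (hS T))]
    _ ≤ (μ Set.univ).toReal := by
        apply ENNReal.toReal_mono (measure_ne_top μ _)
        exact measure_mono (Set.subset_univ _)
    _ = 1 := by simp

lemma sum_K {m : ℕ} (c : Finset (Fin m) → ℝ) (hc : ∀ T, 0 ≤ c T)
    (hsum : ∑ T : Finset (Fin m), c T ≤ 1) (α' : ℝ) (hα' : 0 ≤ α') :
    ∑ j : Fin m, ∑ T : Finset (Fin m), (if j ∈ T then c T * (α'/T.card) else 0) ≤ α' := by
  rw [Finset.sum_comm]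
  calc ∑ T : Finset (Fin m), ∑ j : Fin m, (if j ∈ T then c T * (α'/T.card) else 0)
      = ∑ T : Finset (Fin m), (T.card : ℝ) * (c T * (α'/T.card)) := by
        apply Finset.sum_congr rfl
        intro T _
        rw [Finset.sum_ite_mem, Finset.univ_inter, Finset.sum_const, nsmul_eq_mul]
    _ ≤ ∑ T : Finset (Fin m), c T * α' := by
        apply Finset.sum_le_sum
        intro T _
        rcases Nat.eq_zero_or_pos T.card with h0 | h1
        · rw [h0]
          simp
          exact mul_nonneg (hc T) hα'
        · have hpos : (0:ℝ) < T.card := by exact_mod_cast h1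
          have hne : (T.card:ℝ) ≠ 0 := ne_of_gt hpos
          exact le_of_eq (by field_simp)
    _ = (∑ T : Finset (Fin m), c T) * α' := by rw [Finset.sum_mul]
    _ ≤ 1 * α' := mul_le_mul_of_nonneg_right hsum hα'
    _ = α' := one_mul α'

lemma integrable_gsum {Ω : Type*} [MeasurableSpace Ω] (μ : Measure Ω) [IsProbabilityMeasure μ]
    {m : ℕ} (X : Ω → ℝ) (hX : Measurable X) (Y : Ω → Fin m → ℝ) (hY : Measurable Y)
    (S : (Fin m → ℝ) → Finset (Fin m)) (hS : ∀ j, MeasurableSet {p : Fin m → ℝ | j ∈ S p})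
    (α' : ℝ) (j : Fin m) :
    Integrable (fun ω => gsum α' (S (Y ω)) j (X ω)) μ := by
  have : (fun ω => gsum α' (S (Y ω)) j (X ω))
      = fun ω => ∑ T : Finset (Fin m), (if j ∈ T then gterm α' T (S (Y ω)) (X ω) else 0) := rfl
  rw [this]
  apply integrable_finset_sum
  intro T _
  by_cases hjT : j ∈ T
  · simp only [if_pos hjT]
    exact integrable_gterm μ X hX Y hY S hS α' T
  · simp only [if_neg hjT]
    exact integrable_const 0

lemma integral_gsum_le {Ω : Type*} [MeasurableSpace Ω] (μ : Measure Ω) [IsProbabilityMeasure μ]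
    {m : ℕ} (X : Ω → ℝ) (hX : Measurable X) (Y : Ω → Fin m → ℝ) (hY : Measurable Y)
    (S : (Fin m → ℝ) → Finset (Fin m)) (hS : ∀ j, MeasurableSet {p : Fin m → ℝ | j ∈ S p})
    (α' : ℝ) (hα'0 : 0 ≤ α') (hα'1 : α' ≤ 1)
    (hunif : ∀ x ∈ Set.Icc (0:ℝ) 1, μ {ω | X ω ≤ x} ≤ ENNReal.ofReal x)
    (hind : IndepFun X Y μ) (j : Fin m) :
    ∫ ω, gsum α' (S (Y ω)) j (X ω) ∂μ
      ≤ ∑ T : Finset (Fin m),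
          (if j ∈ T then (μ (Y ⁻¹' {p | S p = T})).toReal * (α'/T.card) else 0) := by
  have heq : (fun ω => gsum α' (S (Y ω)) j (X ω))
      = fun ω => ∑ T : Finset (Fin m), (if j ∈ T then gterm α' T (S (Y ω)) (X ω) else 0) := rfl
  rw [heq, integral_finset_sum]
  · apply Finset.sum_le_sum
    intro T _
    by_cases hjT : j ∈ T
    · simp only [if_pos hjT]
      exact integral_gterm_le μ X hX Y hY S hS α' hα'0 hα'1 hunif hind T
    · simp only [if_neg hjT]
      rw [integral_zero]
  · intro T _
    by_cases hjT : j ∈ T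
    · simp only [if_pos hjT]
      exact integrable_gterm μ X hX Y hY S hS α' T
    · simp only [if_neg hjT]
      exact integrable_const 0

lemma study_total {Ω : Type*} [MeasurableSpace Ω] (μ : Measure Ω) [IsProbabilityMeasure μ]
    {m : ℕ} (X : Fin m → Ω → ℝ) (hX : ∀ j, Measurable (X j))
    (Y : Ω → Fin m → ℝ) (hY : Measurable Y)
    (S : (Fin m → ℝ) → Finset (Fin m)) (hS : ∀ j, MeasurableSet {p : Fin m → ℝ | j ∈ S p})
    (α' : ℝ) (hα'0 : 0 ≤ α') (hα'1 : α' ≤ 1)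
    (cond : Fin m → Prop) [∀ j, Decidable (cond j)]
    (hunif : ∀ j, cond j → ∀ x ∈ Set.Icc (0:ℝ) 1, μ {ω | X j ω ≤ x} ≤ ENNReal.ofReal x)
    (hind : ∀ j, cond j → IndepFun (X j) Y μ) :
    ∑ j : Fin m, ∫ ω, (if cond j then gsum α' (S (Y ω)) j (X j ω) else 0) ∂μ ≤ α' := by
  have hKnn : ∀ T : Finset (Fin m), (0:ℝ) ≤ (μ (Y ⁻¹' {p | S p = T})).toReal * (α'/T.card) :=
    fun T => mul_nonneg ENNReal.toReal_nonneg (div_nonneg hα'0 (Nat.cast_nonneg _))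
  calc ∑ j : Fin m, ∫ ω, (if cond j then gsum α' (S (Y ω)) j (X j ω) else 0) ∂μ
      ≤ ∑ j : Fin m, ∑ T : Finset (Fin m),
          (if j ∈ T then (μ (Y ⁻¹' {p | S p = T})).toReal * (α'/T.card) else 0) := by
        apply Finset.sum_le_sum
        intro j _
        by_cases hc : cond j
        · simp only [if_pos hc]
          exact integral_gsum_le μ (X j) (hX j) Y hY S hS α' hα'0 hα'1
            (hunif j hc) (hind j hc) j
        · simp only [if_neg hc, integral_zero]
          apply Finset.sum_nonneg
          intro T _
          split
          · exact hKnn T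
          · exact le_rfl
    _ ≤ α' := sum_K (fun T => (μ (Y ⁻¹' {p | S p = T})).toReal)
        (fun T => ENNReal.toReal_nonneg)
        (sum_c_le_one μ Y hY S (fun T => measurable_eq_finset S hS T)) α' hα'0

end FDRAux

/-- Theorem 2, item 2.  Under the null independence-across-studies
condition, with arbitrary dependence among the p-values within each study, null p-values
stochastically at least uniform and stable selection rules, the harmonic-sum-corrected
step-up FDR-replicability procedure, using thresholds `(rα₁/(S₂·H(S₂)), r(α−α₁)/(S₁·H(S₁)))`
where `H(k) = Σ_{l=1}^k 1/l`, controls the FDR for replicability analysis at level `α`. -/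
theorem fdr_replicability_arbitrary_dependence
    {Ω : Type*} [MeasurableSpace Ω] (μ : Measure Ω) [IsProbabilityMeasure μ]
    (m : ℕ) (P1 P2 : Ω → Fin m → ℝ) (hP1 : Measurable P1) (hP2 : Measurable P2)
    (H1 H2 : Fin m → Bool)
    (hrange1 : ∀ ω j, P1 ω j ∈ Set.Icc (0:ℝ) 1) (hrange2 : ∀ ω j, P2 ω j ∈ Set.Icc (0:ℝ) 1)
    -- null p-values are stochastically at least uniform
    (hunif1 : ∀ j, H1 j = false → ∀ x ∈ Set.Icc (0:ℝ) 1,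
      μ {ω | P1 ω j ≤ x} ≤ ENNReal.ofReal x)
    (hunif2 : ∀ j, H2 j = false → ∀ x ∈ Set.Icc (0:ℝ) 1,
      μ {ω | P2 ω j ≤ x} ≤ ENNReal.ofReal x)
    -- null independence-across-studies condition
    (hind1 : ∀ j, (H1 j = false ∨ H2 j = false) → H1 j = false →
      IndepFun (fun ω => P1 ω j) P2 μ)
    (hind2 : ∀ j, (H1 j = false ∨ H2 j = false) → H2 j = false →
      IndepFun (fun ω => P2 ω j) P1 μ)
    -- stable (measurable) selection rules
    (S1 S2 : (Fin m → ℝ) → Finset (Fin m))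
    (hstable1 : StableSelection S1) (hstable2 : StableSelection S2)
    (hS1 : ∀ j, MeasurableSet {p : Fin m → ℝ | j ∈ S1 p})
    (hS2 : ∀ j, MeasurableSet {p : Fin m → ℝ | j ∈ S2 p})
    (α α₁ : ℝ) (hα : α ∈ Set.Ioo (0:ℝ) 1) (hα₁ : α₁ ∈ Set.Ioo (0:ℝ) α) :
    ∫ ω, fdpRepl H1 H2
        (stepUpReject (↑(S1 (P1 ω) ∩ S2 (P2 ω))) (P1 ω) (P2 ω)
          (α₁ / ((S2 (P2 ω)).card * harmonic' (S2 (P2 ω)).card))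
          ((α - α₁) / ((S1 (P1 ω)).card * harmonic' (S1 (P1 ω)).card))) ∂μ
      ≤ α := by
  classical
  have hα₁0 : 0 ≤ α₁ := le_of_lt hα₁.1
  have hα₁1 : α₁ ≤ 1 := le_trans (le_of_lt hα₁.2) (le_of_lt hα.2)
  have hα₂0 : 0 ≤ α - α₁ := by linarith [hα₁.2]
  have hα₂1 : α - α₁ ≤ 1 := by linarith [hα.2, hα₁.1]
  have hP1j : ∀ j : Fin m, Measurable fun ω => P1 ω j :=
    fun j => (measurable_pi_apply j).comp hP1
  have hP2j : ∀ j : Fin m, Measurable fun ω => P2 ω j :=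
    fun j => (measurable_pi_apply j).comp hP2
  have hint1 : ∀ j : Fin m, Integrable
      (fun ω => if H1 j = false then FDRAux.gsum α₁ (S2 (P2 ω)) j (P1 ω j) else 0) μ := by
    intro j
    by_cases hc : H1 j = false
    · simp only [if_pos hc]
      exact FDRAux.integrable_gsum μ (fun ω => P1 ω j) (hP1j j) P2 hP2 S2 hS2 α₁ j
    · simp only [if_neg hc]
      exact integrable_const 0
  have hint2 : ∀ j : Fin m, Integrable
      (fun ω => if H1 j = true ∧ H2 j = false
        then FDRAux.gsum (α - α₁) (S1 (P1 ω)) j (P2 ω j) else 0) μ := by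
    intro j
    by_cases hc : H1 j = true ∧ H2 j = false
    · simp only [if_pos hc]
      exact FDRAux.integrable_gsum μ (fun ω => P2 ω j) (hP2j j) P1 hP1 S1 hS1 (α - α₁) j
    · simp only [if_neg hc]
      exact integrable_const 0
  have hintG : Integrable (fun ω => ∑ j : Fin m,
      ((if H1 j = false then FDRAux.gsum α₁ (S2 (P2 ω)) j (P1 ω j) else 0)
        + (if H1 j = true ∧ H2 j = false
            then FDRAux.gsum (α - α₁) (S1 (P1 ω)) j (P2 ω j) else 0))) μ :=
    integrable_finset_sum _ (fun j _ => (hint1 j).add (hint2 j))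
  have hpt : ∀ ω, fdpRepl H1 H2
      (stepUpReject (↑(S1 (P1 ω) ∩ S2 (P2 ω))) (P1 ω) (P2 ω)
        (α₁ / ((S2 (P2 ω)).card * harmonic' (S2 (P2 ω)).card))
        ((α - α₁) / ((S1 (P1 ω)).card * harmonic' (S1 (P1 ω)).card)))
      ≤ ∑ j : Fin m,
        ((if H1 j = false then FDRAux.gsum α₁ (S2 (P2 ω)) j (P1 ω j) else 0)
          + (if H1 j = true ∧ H2 j = false
              then FDRAux.gsum (α - α₁) (S1 (P1 ω)) j (P2 ω j) else 0)) := by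
    intro ω
    rw [FDRAux.fdp_expand]
    apply Finset.sum_le_sum
    intro j _
    have hsub2 : ∀ k ∈ (↑(S1 (P1 ω) ∩ S2 (P2 ω)) : Set (Fin m)), k ∈ S2 (P2 ω) :=
      fun k hk => (Finset.mem_inter.mp (Finset.mem_coe.mp hk)).2
    have hsub1 : ∀ k ∈ (↑(S1 (P1 ω) ∩ S2 (P2 ω)) : Set (Fin m)), k ∈ S1 (P1 ω) :=
      fun k hk => (Finset.mem_inter.mp (Finset.mem_coe.mp hk)).1
    by_cases h1 : H1 j = false
    · rw [if_pos h1, if_neg (by simp [h1] : ¬(H1 j = true ∧ H2 j = false)), add_zero]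
      have hD : (0:ℝ) < max (Nat.card {k : Fin m //
          k ∈ stepUpReject (↑(S1 (P1 ω) ∩ S2 (P2 ω))) (P1 ω) (P2 ω)
            (α₁ / ((S2 (P2 ω)).card * harmonic' (S2 (P2 ω)).card))
            ((α - α₁) / ((S1 (P1 ω)).card * harmonic' (S1 (P1 ω)).card))} : ℝ) 1 :=
        lt_of_lt_of_le one_pos (le_max_right _ _)
      have hnum : (if j ∈ stepUpReject (↑(S1 (P1 ω) ∩ S2 (P2 ω))) (P1 ω) (P2 ω)
            (α₁ / ((S2 (P2 ω)).card * harmonic' (S2 (P2 ω)).card))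
            ((α - α₁) / ((S1 (P1 ω)).card * harmonic' (S1 (P1 ω)).card))
            ∧ (H1 j = false ∨ H2 j = false) then (1:ℝ) else 0)
          ≤ (if j ∈ stepUpReject (↑(S1 (P1 ω) ∩ S2 (P2 ω))) (P1 ω) (P2 ω)
            (α₁ / ((S2 (P2 ω)).card * harmonic' (S2 (P2 ω)).card))
            ((α - α₁) / ((S1 (P1 ω)).card * harmonic' (S1 (P1 ω)).card)) then 1 else 0) := by
        by_cases h : j ∈ stepUpReject (↑(S1 (P1 ω) ∩ S2 (P2 ω))) (P1 ω) (P2 ω)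
            (α₁ / ((S2 (P2 ω)).card * harmonic' (S2 (P2 ω)).card))
            ((α - α₁) / ((S1 (P1 ω)).card * harmonic' (S1 (P1 ω)).card))
            ∧ (H1 j = false ∨ H2 j = false)
        · rw [if_pos h, if_pos h.1]
        · rw [if_neg h]
          split <;> norm_num
      refine le_trans ((div_le_div_iff_of_pos_right hD).mpr hnum) ?_
      exact FDRAux.perj1 (↑(S1 (P1 ω) ∩ S2 (P2 ω))) (P1 ω) (P2 ω)
        ((α - α₁) / ((S1 (P1 ω)).card * harmonic' (S1 (P1 ω)).card))
        (S2 (P2 ω)) hsub2 α₁ hα₁0 j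
    · have h1' : H1 j = true := by
        cases hb : H1 j
        · exact absurd hb h1
        · rfl
      by_cases h2 : H2 j = false
      · rw [if_neg h1, if_pos (show H1 j = true ∧ H2 j = false from ⟨h1', h2⟩), zero_add]
        rw [FDRAux.reject_swap]
        have hD : (0:ℝ) < max (Nat.card {k : Fin m //
            k ∈ stepUpReject (↑(S1 (P1 ω) ∩ S2 (P2 ω))) (P2 ω) (P1 ω)
              ((α - α₁) / ((S1 (P1 ω)).card * harmonic' (S1 (P1 ω)).card))
              (α₁ / ((S2 (P2 ω)).card * harmonic' (S2 (P2 ω)).card))} : ℝ) 1 :=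
          lt_of_lt_of_le one_pos (le_max_right _ _)
        have hnum : (if j ∈ stepUpReject (↑(S1 (P1 ω) ∩ S2 (P2 ω))) (P2 ω) (P1 ω)
              ((α - α₁) / ((S1 (P1 ω)).card * harmonic' (S1 (P1 ω)).card))
              (α₁ / ((S2 (P2 ω)).card * harmonic' (S2 (P2 ω)).card))
              ∧ (H1 j = false ∨ H2 j = false) then (1:ℝ) else 0)
            ≤ (if j ∈ stepUpReject (↑(S1 (P1 ω) ∩ S2 (P2 ω))) (P2 ω) (P1 ω)
              ((α - α₁) / ((S1 (P1 ω)).card * harmonic' (S1 (P1 ω)).card))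
              (α₁ / ((S2 (P2 ω)).card * harmonic' (S2 (P2 ω)).card)) then 1 else 0) := by
          by_cases h : j ∈ stepUpReject (↑(S1 (P1 ω) ∩ S2 (P2 ω))) (P2 ω) (P1 ω)
              ((α - α₁) / ((S1 (P1 ω)).card * harmonic' (S1 (P1 ω)).card))
              (α₁ / ((S2 (P2 ω)).card * harmonic' (S2 (P2 ω)).card))
              ∧ (H1 j = false ∨ H2 j = false)
          · rw [if_pos h, if_pos h.1]
          · rw [if_neg h]
            split <;> norm_num
        refine le_trans ((div_le_div_iff_of_pos_right hD).mpr hnum) ?_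
        exact FDRAux.perj1 (↑(S1 (P1 ω) ∩ S2 (P2 ω))) (P2 ω) (P1 ω)
          (α₁ / ((S2 (P2 ω)).card * harmonic' (S2 (P2 ω)).card))
          (S1 (P1 ω)) hsub1 (α - α₁) hα₂0 j
      · rw [if_neg h1, if_neg (show ¬(H1 j = true ∧ H2 j = false) from fun hc => h2 hc.2)]
        have hno : ¬(j ∈ stepUpReject (↑(S1 (P1 ω) ∩ S2 (P2 ω))) (P1 ω) (P2 ω)
            (α₁ / ((S2 (P2 ω)).card * harmonic' (S2 (P2 ω)).card))
            ((α - α₁) / ((S1 (P1 ω)).card * harmonic' (S1 (P1 ω)).card))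
            ∧ (H1 j = false ∨ H2 j = false)) := by
          rintro ⟨-, h | h⟩
          exacts [h1 h, h2 h]
        rw [if_neg hno, zero_div, add_zero]
  calc ∫ ω, fdpRepl H1 H2
        (stepUpReject (↑(S1 (P1 ω) ∩ S2 (P2 ω))) (P1 ω) (P2 ω)
          (α₁ / ((S2 (P2 ω)).card * harmonic' (S2 (P2 ω)).card))
          ((α - α₁) / ((S1 (P1 ω)).card * harmonic' (S1 (P1 ω)).card))) ∂μ
      ≤ ∫ ω, ∑ j : Fin m,
          ((if H1 j = false then FDRAux.gsum α₁ (S2 (P2 ω)) j (P1 ω j) else 0)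
            + (if H1 j = true ∧ H2 j = false
                then FDRAux.gsum (α - α₁) (S1 (P1 ω)) j (P2 ω j) else 0)) ∂μ :=
        integral_mono_of_nonneg (ae_of_all μ (fun ω => FDRAux.fdp_nonneg H1 H2 _))
          hintG (ae_of_all μ hpt)
    _ = ∑ j : Fin m, ∫ ω,
          ((if H1 j = false then FDRAux.gsum α₁ (S2 (P2 ω)) j (P1 ω j) else 0)
            + (if H1 j = true ∧ H2 j = false
                then FDRAux.gsum (α - α₁) (S1 (P1 ω)) j (P2 ω j) else 0)) ∂μ :=
        integral_finset_sum _ (fun j _ => (hint1 j).add (hint2 j))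
    _ = ∑ j : Fin m,
          ((∫ ω, (if H1 j = false then FDRAux.gsum α₁ (S2 (P2 ω)) j (P1 ω j) else 0) ∂μ)
            + (∫ ω, (if H1 j = true ∧ H2 j = false
                then FDRAux.gsum (α - α₁) (S1 (P1 ω)) j (P2 ω j) else 0) ∂μ)) :=
        Finset.sum_congr rfl (fun j _ => integral_add (hint1 j) (hint2 j))
    _ = (∑ j : Fin m, ∫ ω, (if H1 j = false
            then FDRAux.gsum α₁ (S2 (P2 ω)) j (P1 ω j) else 0) ∂μ)
          + (∑ j : Fin m, ∫ ω, (if H1 j = true ∧ H2 j = false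
            then FDRAux.gsum (α - α₁) (S1 (P1 ω)) j (P2 ω j) else 0) ∂μ) :=
        Finset.sum_add_distrib
    _ ≤ α₁ + (α - α₁) := by
        apply add_le_add
        · exact FDRAux.study_total μ (fun j ω => P1 ω j) hP1j P2 hP2 S2 hS2 α₁ hα₁0 hα₁1
            (fun j => H1 j = false) (fun j hc => hunif1 j hc)
            (fun j hc => hind1 j (Or.inl hc) hc)
        · exact FDRAux.study_total μ (fun j ω => P2 ω j) hP2j P1 hP1 S1 hS1 (α - α₁) hα₂0 hα₂1
            (fun j => H1 j = true ∧ H2 j = false) (fun j hc => hunif2 j hc.2)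
            (fun j hc => hind2 j (Or.inr hc.2) hc.2)
    _ = α := by ring
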